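/- Let p be an odd prime with p ≡ 3 (mod 4), let k ≥ 1 and let t ∈ Z_{p^k}. If t = 0 then N_2(t, p^k) = p^{2⌊k/2⌋}. If t ≠ 0, write t = p^α β with p ∤ β and 0 ≤ α < k; then N_2(t, p^k) = (p + 1) p^{k−1} if α is even, and N_2(t, p^k) = 0 if α is odd. -/

import Mathlib

open Finset

/-- `sumSqCount m n t` is the number of `m`-tuples of elements of `ZMod n` whose
squares sum to `t`. -/
noncomputable def sumSqCount (m n : ℕ) (t : ZMod n) : ℕ :=
  Nat.card {x : Fin m → ZMod n // ∑ i, (x i) ^ 2 = t}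

/-- count as a Finset card -/
def cnt (n : ℕ) [NeZero n] (t : ZMod n) : ℕ :=
  (Finset.univ.filter (fun z : ZMod n × ZMod n => z.1 ^ 2 + z.2 ^ 2 = t)).card

lemma sumSqCount_eq_cnt (n : ℕ) [NeZero n] (t : ZMod n) :
    sumSqCount 2 n t = cnt n t := by
  have e : {x : Fin 2 → ZMod n // ∑ i, (x i) ^ 2 = t} ≃
      {z : ZMod n × ZMod n // z.1 ^ 2 + z.2 ^ 2 = t} :=
    Equiv.subtypeEquiv (finTwoArrowEquiv _) (by
      intro x
      simp [Fin.sum_univ_two, finTwoArrowEquiv])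
  rw [sumSqCount, Nat.card_congr e, Nat.card_eq_fintype_card, cnt, Fintype.card_subtype]

lemma sqAddSq_eq_zero (p : ℕ) [Fact p.Prime] (hp4 : p % 4 = 3) {x y : ZMod p}
    (h : x ^ 2 + y ^ 2 = 0) : x = 0 ∧ y = 0 := by
  have hns : ¬ IsSquare (-1 : ZMod p) := by
    rw [ZMod.exists_sq_eq_neg_one_iff]; simp [hp4]
  have hy : y = 0 := by
    by_contra hy
    apply hns
    refine ⟨x * y⁻¹, ?_⟩
    have hyy : y * y⁻¹ = 1 := mul_inv_cancel₀ hy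
    linear_combination (-(y⁻¹^2)) * h + (y*y⁻¹+1) * hyy
  refine ⟨?_, hy⟩
  have hx2 : x ^ 2 = 0 := by rw [hy] at h; linear_combination h
  exact pow_eq_zero_iff (by norm_num) |>.mp hx2

variable {p k : ℕ}

lemma neZeroPow [Fact p.Prime] : NeZero (p ^ k) :=
  ⟨pow_ne_zero _ (Nat.Prime.ne_zero Fact.out)⟩

lemma proj_natCast [Fact p.Prime] (hk : k ≠ 0) (x : ZMod (p^k)) :
    ZMod.castHom (dvd_pow_self p hk) (ZMod p) x = (x.val : ZMod p) := by
  haveI : NeZero (p ^ k) := neZeroPow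
  conv_lhs => rw [← ZMod.natCast_zmod_val x]
  rw [map_natCast]

lemma isUnit_iff_proj [Fact p.Prime] (hk : k ≠ 0) (x : ZMod (p^k)) :
    IsUnit x ↔ ZMod.castHom (dvd_pow_self p hk) (ZMod p) x ≠ 0 := by
  haveI : NeZero (p ^ k) := neZeroPow
  have hp : p.Prime := Fact.out
  rw [proj_natCast hk, Ne, ZMod.natCast_eq_zero_iff]
  conv_lhs => rw [← ZMod.natCast_zmod_val x]
  rw [ZMod.isUnit_iff_coprime]
  rw [Nat.coprime_pow_right_iff (Nat.pos_of_ne_zero hk)]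
  rw [Nat.coprime_comm]
  exact hp.coprime_iff_not_dvd

lemma isUnit_iff_not_dvd [Fact p.Prime] (hk : k ≠ 0) (x : ZMod (p^k)) :
    IsUnit x ↔ ¬ p ∣ x.val := by
  haveI : NeZero (p ^ k) := neZeroPow
  rw [isUnit_iff_proj hk, proj_natCast hk, Ne, ZMod.natCast_eq_zero_iff]



lemma sq_eq_one_cases [Fact p.Prime] (hp2 : p ≠ 2) {x : ZMod (p^k)} (h : x^2 = 1) :
    x = 1 ∨ x = -1 := by
  haveI : NeZero (p ^ k) := ⟨pow_ne_zero _ (Nat.Prime.ne_zero Fact.out)⟩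
  have hp : p.Prime := Fact.out
  set a : ℤ := (x.val : ℤ) with ha
  have hx : ((a : ℤ) : ZMod (p^k)) = x := by
    rw [Int.cast_natCast, ZMod.natCast_zmod_val]
  have hdvd : ((p^k : ℕ) : ℤ) ∣ (a - 1) * (a + 1) := by
    rw [← ZMod.intCast_zmod_eq_zero_iff_dvd]
    push_cast
    rw [hx]
    linear_combination h
  have hpI : Prime (p : ℤ) := Int.prime_iff_natAbs_prime.mpr (by simpa using hp)
  have hpk : ((p^k : ℕ) : ℤ) = (p : ℤ)^k := by push_cast; ring
  rw [hpk] at hdvd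
  by_cases hm : (p : ℤ) ∣ a - 1
  · -- then p does not divide a + 1
    have hnot : ¬ (p : ℤ) ∣ a + 1 := by
      intro hP
      have : (p : ℤ) ∣ 2 := by
        have := dvd_sub hP hm
        simpa using this
      have h2 : (p : ℕ) ∣ 2 := by exact_mod_cast this
      exact hp2 ((Nat.prime_dvd_prime_iff_eq hp Nat.prime_two).mp h2)
    have hcop : IsCoprime ((p:ℤ)^k) (a + 1) :=
      (hpI.coprime_iff_not_dvd.mpr hnot).pow_left
    have : (p:ℤ)^k ∣ a - 1 := hcop.dvd_of_dvd_mul_right hdvd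
    left
    have : ((a - 1 : ℤ) : ZMod (p^k)) = 0 := by
      rw [ZMod.intCast_zmod_eq_zero_iff_dvd]
      exact_mod_cast this
    push_cast at this
    rw [hx] at this
    linear_combination this
  · have hcop : IsCoprime ((p:ℤ)^k) (a - 1) :=
      (hpI.coprime_iff_not_dvd.mpr hm).pow_left
    have : (p:ℤ)^k ∣ a + 1 := hcop.dvd_of_dvd_mul_left hdvd
    right
    have : ((a + 1 : ℤ) : ZMod (p^k)) = 0 := by
      rw [ZMod.intCast_zmod_eq_zero_iff_dvd]
      exact_mod_cast this
    push_cast at this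
    rw [hx] at this
    linear_combination this

/-- fibers of the reduction map all have cardinality `n / m`. -/
lemma card_fiber_castHom (m n : ℕ) [NeZero n] (h : m ∣ n) (c : ZMod m) :
    (Finset.univ.filter (fun x : ZMod n => ZMod.castHom h (ZMod m) x = c)).card * m = n := by
  classical
  haveI : NeZero m := ⟨by rintro rfl; exact (NeZero.ne n) (Nat.eq_zero_of_zero_dvd h)⟩
  set π := ZMod.castHom h (ZMod m) with hπ
  have key : ∀ c' : ZMod m,
      (Finset.univ.filter (fun x : ZMod n => π x = c')).card
      = (Finset.univ.filter (fun x : ZMod n => π x = c)).card := by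
    intro c'
    obtain ⟨d, hd⟩ : ∃ d : ZMod n, π d = c' - c :=
      ⟨((c' - c).val : ZMod n), by rw [hπ, map_natCast, ZMod.natCast_zmod_val]⟩
    apply Finset.card_bij' (fun x _ => x - d) (fun y _ => y + d)
    · intro x hx
      simp only [mem_filter, mem_univ, true_and] at hx ⊢
      rw [map_sub, hx, hd]; ring
    · intro y hy
      simp only [mem_filter, mem_univ, true_and] at hy ⊢
      rw [map_add, hy, hd]; ring
    · intro x _; ring
    · intro y _; ring
  have total : (Finset.univ : Finset (ZMod n)).card
      = ∑ c' : ZMod m, (Finset.univ.filter (fun x : ZMod n => π x = c')).card :=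
    Finset.card_eq_sum_card_fiberwise (fun x _ => Finset.mem_univ _)
  rw [Finset.card_univ, ZMod.card] at total
  have : ∑ c' : ZMod m, (Finset.univ.filter (fun x : ZMod n => π x = c')).card
      = (Finset.univ.filter (fun x : ZMod n => π x = c)).card * m := by
    rw [Finset.sum_congr rfl (fun c' _ => key c')]
    simp [mul_comm, Finset.card_univ, ZMod.card]
  omega

lemma nonsq_mul {G : Type*} [CommGroup G] [Finite G] (x0 : G) (hx0 : x0 ≠ 1)
    (hker : ∀ x : G, x ^ 2 = 1 ↔ x = 1 ∨ x = x0)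
    {a b : G} (ha : ¬ IsSquare a) (hb : ¬ IsSquare b) : IsSquare (a⁻¹ * b) := by
  classical
  set φ := (powMonoidHom 2 : G →* G) with hφ
  set R := φ.range with hR
  have hmem : ∀ g : G, IsSquare g ↔ g ∈ R := by
    intro g
    rw [hR, MonoidHom.mem_range]
    constructor
    · rintro ⟨r, rfl⟩
      exact ⟨r, by rw [hφ, powMonoidHom_apply, sq]⟩
    · rintro ⟨r, rfl⟩
      exact ⟨r, by rw [hφ, powMonoidHom_apply, sq]⟩
  have hkerset : (φ.ker : Set G) = {1, x0} := by
    ext x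
    simp only [SetLike.mem_coe, MonoidHom.mem_ker, hφ, powMonoidHom_apply,
      Set.mem_insert_iff, Set.mem_singleton_iff]
    exact hker x
  have hck : Nat.card φ.ker = 2 := by
    rw [← SetLike.coe_sort_coe, hkerset, Nat.card_coe_set_eq,
      Set.ncard_pair (Ne.symm hx0)]
  have h1 : Nat.card G = Nat.card (G ⧸ φ.ker) * 2 := by
    rw [← hck]; exact Subgroup.card_eq_card_quotient_mul_card_subgroup φ.ker
  have h2 : Nat.card (G ⧸ φ.ker) = Nat.card R :=
    Nat.card_congr (QuotientGroup.quotientKerEquivRange φ).toEquiv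
  have h3 : Nat.card G = Nat.card (G ⧸ R) * Nat.card R :=
    Subgroup.card_eq_card_quotient_mul_card_subgroup R
  have hRpos : 0 < Nat.card R := Nat.card_pos
  have hQ2 : Nat.card (G ⧸ R) = 2 := by
    have h4 : Nat.card (G ⧸ R) * Nat.card R = 2 * Nat.card R := by
      rw [← h3, h1, h2]; ring
    exact Nat.eq_of_mul_eq_mul_right hRpos h4
  have haQ : (QuotientGroup.mk a : G ⧸ R) ≠ 1 := by
    rw [Ne, QuotientGroup.eq_one_iff]
    exact fun h => ha ((hmem a).mpr h)
  have hbQ : (QuotientGroup.mk b : G ⧸ R) ≠ 1 := by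
    rw [Ne, QuotientGroup.eq_one_iff]
    exact fun h => hb ((hmem b).mpr h)
  have heq : (QuotientGroup.mk a : G ⧸ R) = QuotientGroup.mk b := by
    by_contra hne
    have h3elt : ({1, (QuotientGroup.mk a : G ⧸ R), QuotientGroup.mk b} : Set (G ⧸ R)).ncard = 3 := by
      rw [Set.ncard_insert_of_notMem (by simp [Ne.symm haQ, Ne.symm hbQ]),
        Set.ncard_pair hne]
    have hle : ({1, (QuotientGroup.mk a : G ⧸ R), QuotientGroup.mk b} : Set (G ⧸ R)).ncard
        ≤ Nat.card (G ⧸ R) := by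
      rw [← Set.ncard_univ]
      exact Set.ncard_le_ncard (Set.subset_univ _) Set.finite_univ
    omega
  have : a⁻¹ * b ∈ R := QuotientGroup.eq.mp heq
  exact (hmem _).mpr this
/-- multiplication by a "Gaussian unit" gives a bijection between circles -/
lemma cnt_mul_sumsq (n : ℕ) [NeZero n] (a b : ZMod n) (h : IsUnit (a^2+b^2)) (t : ZMod n) :
    cnt n ((a^2+b^2) * t) = cnt n t := by
  classical
  set v := h.unit with hvdef
  have hv : (v : ZMod n) = a^2+b^2 := h.unit_spec
  have hinv : ((v⁻¹ : (ZMod n)ˣ) : ZMod n) * (v : ZMod n) = 1 := v.inv_mul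
  rw [cnt, cnt]
  apply Finset.card_bij'
    (fun w _ => ((↑(v⁻¹:(ZMod n)ˣ) * (a * w.1 + b * w.2),
                  ↑(v⁻¹:(ZMod n)ˣ) * (a * w.2 - b * w.1)) : ZMod n × ZMod n))
    (fun z _ => ((a * z.1 - b * z.2, b * z.1 + a * z.2) : ZMod n × ZMod n))
  · -- maps circle (a²+b²)t into circle t
    intro w hw
    simp only [mem_filter, mem_univ, true_and] at hw ⊢
    set i := ((v⁻¹:(ZMod n)ˣ) : ZMod n)
    have e1 : (a*w.1+b*w.2)^2 + (a*w.2-b*w.1)^2 = (v:ZMod n) * ((v:ZMod n) * t) := by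
      rw [hv]; linear_combination (a^2+b^2) * hw
    calc (i * (a*w.1+b*w.2))^2 + (i * (a*w.2-b*w.1))^2
        = i^2 * ((a*w.1+b*w.2)^2 + (a*w.2-b*w.1)^2) := by ring
      _ = i^2 * ((v:ZMod n) * ((v:ZMod n) * t)) := by rw [e1]
      _ = (i*(v:ZMod n)) * (i*(v:ZMod n)) * t := by ring
      _ = t := by rw [hinv]; ring
  · intro z hz
    simp only [mem_filter, mem_univ, true_and] at hz ⊢
    linear_combination (a^2+b^2) * hz
  · intro w hw
    set i := ((v⁻¹:(ZMod n)ˣ) : ZMod n)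
    have c1 : a * (i * (a * w.1 + b * w.2)) - b * (i * (a * w.2 - b * w.1))
        = (i * (v:ZMod n)) * w.1 := by rw [hv]; ring
    have c2 : b * (i * (a * w.1 + b * w.2)) + a * (i * (a * w.2 - b * w.1))
        = (i * (v:ZMod n)) * w.2 := by rw [hv]; ring
    ext
    · simp only; rw [c1, hinv, one_mul]
    · simp only; rw [c2, hinv, one_mul]
  · intro z hz
    set i := ((v⁻¹:(ZMod n)ˣ) : ZMod n)
    have c1 : i * (a * (a * z.1 - b * z.2) + b * (b * z.1 + a * z.2))
        = (i * (v:ZMod n)) * z.1 := by rw [hv]; ring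
    have c2 : i * (a * (b * z.1 + a * z.2) - b * (a * z.1 - b * z.2))
        = (i * (v:ZMod n)) * z.2 := by rw [hv]; ring
    ext
    · simp only; rw [c1, hinv, one_mul]
    · simp only; rw [c2, hinv, one_mul]

lemma exists_nonsquare_sumsq [Fact p.Prime] (hp2 : p ≠ 2) (hk : k ≠ 0) :
    ∃ A B : ZMod (p^k), IsUnit (A^2+B^2) ∧ ¬ IsSquare (A^2+B^2) := by
  haveI : NeZero (p^k) := neZeroPow
  have hp : p.Prime := Fact.out
  have hchar : ringChar (ZMod p) ≠ 2 := by
    rw [ZMod.ringChar_zmod_n]; exact hp2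
  obtain ⟨c, hc⟩ := FiniteField.exists_nonsquare hchar
  have hc0 : c ≠ 0 := by
    rintro rfl
    exact hc (⟨0, by ring⟩)
  obtain ⟨a, b, hab⟩ := ZMod.sq_add_sq p c
  set π := ZMod.castHom (dvd_pow_self p hk) (ZMod p) with hπ
  set A : ZMod (p^k) := ((a.val : ℕ) : ZMod (p^k)) with hA
  set B : ZMod (p^k) := ((b.val : ℕ) : ZMod (p^k)) with hB
  have hproj : π (A^2+B^2) = c := by
    rw [map_add, map_pow, map_pow, hA, hB, map_natCast, map_natCast,
      ZMod.natCast_zmod_val, ZMod.natCast_zmod_val, hab]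
  refine ⟨A, B, ?_, ?_⟩
  · rw [isUnit_iff_proj hk, hproj]
    exact hc0
  · rintro ⟨r, hr⟩
    apply hc
    refine ⟨π r, ?_⟩
    rw [← hproj, hr, map_mul]

lemma cnt_const_units [Fact p.Prime] (hp2 : p ≠ 2) (hk : k ≠ 0)
    {t u : ZMod (p^k)} (ht : IsUnit t) (hu : IsUnit u) :
    cnt (p^k) t = cnt (p^k) u := by
  haveI : NeZero (p^k) := neZeroPow
  have hp : p.Prime := Fact.out
  obtain ⟨tu, rfl⟩ := ht
  obtain ⟨uu, rfl⟩ := hu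
  set r : (ZMod (p^k))ˣ := tu⁻¹ * uu with hrdef
  have hrt : (r : ZMod (p^k)) * (tu : ZMod (p^k)) = (uu : ZMod (p^k)) := by
    rw [hrdef, Units.val_mul]
    calc ((tu⁻¹ : (ZMod (p^k))ˣ) : ZMod (p^k)) * (uu : ZMod (p^k)) * (tu : ZMod (p^k))
        = (uu : ZMod (p^k)) * (((tu⁻¹ : (ZMod (p^k))ˣ) : ZMod (p^k)) * (tu : ZMod (p^k))) := by
          ring
      _ = (uu : ZMod (p^k)) := by rw [tu.inv_mul, mul_one]
  -- find c d with c^2 + d^2 = ↑r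
  have hexists : ∃ c d : ZMod (p^k), c^2 + d^2 = (r : ZMod (p^k)) := by
    by_cases hsq : IsSquare r
    · obtain ⟨s, hs⟩ := hsq
      exact ⟨(s : ZMod (p^k)), 0, by rw [hs, Units.val_mul]; ring⟩
    · obtain ⟨A, B, hABu, hABns⟩ := exists_nonsquare_sumsq (p := p) (k := k) hp2 hk
      set wu := hABu.unit with hwud
      have hwuns : ¬ IsSquare wu := by
        rintro ⟨s, hs⟩
        apply hABns
        refine ⟨(s : ZMod (p^k)), ?_⟩
        rw [← hABu.unit_spec, ← hwud, hs, Units.val_mul]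
      -- the kernel of squaring is {1, -1}
      have hm1 : (-1 : (ZMod (p^k))ˣ) ≠ 1 := by
        intro h
        have h2 : ((2:ℕ) : ZMod (p^k)) ≠ 0 := by
          rw [Ne, ZMod.natCast_eq_zero_iff]
          intro hdvd
          have : p ∣ 2 := dvd_trans (dvd_pow_self p hk) hdvd
          exact hp2 ((Nat.prime_dvd_prime_iff_eq hp Nat.prime_two).mp this)
        apply h2
        have hval : ((-1 : (ZMod (p^k))ˣ) : ZMod (p^k)) = ((1 : (ZMod (p^k))ˣ) : ZMod (p^k)) := by
          rw [h]
        rw [Units.val_neg, Units.val_one] at hval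
        push_cast
        linear_combination - hval
      have hker : ∀ x : (ZMod (p^k))ˣ, x ^ 2 = 1 ↔ x = 1 ∨ x = -1 := by
        intro x
        constructor
        · intro hx
          have hx' : (x : ZMod (p^k))^2 = 1 := by
            rw [← Units.val_pow_eq_pow_val, hx, Units.val_one]
          rcases sq_eq_one_cases hp2 hx' with h | h
          · left; ext; rw [h, Units.val_one]
          · right; ext; rw [h, Units.val_neg, Units.val_one]
        · rintro (rfl | rfl) <;> simp
      have hsq2 : IsSquare (wu⁻¹ * r) := nonsq_mul (-1) hm1 hker hwuns hsq
      obtain ⟨s, hs⟩ := hsq2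
      have hreq : r = wu * (s * s) := by
        rw [← hs]
        group
      have hw : ((wu : (ZMod (p^k))ˣ) : ZMod (p^k)) = A^2+B^2 := by
        rw [hwud]; exact hABu.unit_spec
      refine ⟨A * (s : ZMod (p^k)), B * (s : ZMod (p^k)), ?_⟩
      rw [hreq, Units.val_mul, Units.val_mul, hw]
      ring
  obtain ⟨c, d, hcd⟩ := hexists
  have hcdu : IsUnit (c^2+d^2) := by rw [hcd]; exact r.isUnit
  rw [← hrt, ← hcd]
  exact (cnt_mul_sumsq _ c d hcdu _).symm

lemma filter_pair_proj_card (m n : ℕ) [NeZero n] (h : m ∣ n) (c1 c2 : ZMod m) :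
    (Finset.univ.filter (fun z : ZMod n × ZMod n =>
      ZMod.castHom h (ZMod m) z.1 = c1 ∧ ZMod.castHom h (ZMod m) z.2 = c2)).card * (m * m)
      = n * n := by
  classical
  rw [← Finset.univ_product_univ,
    Finset.filter_product (fun a : ZMod n => ZMod.castHom h (ZMod m) a = c1)
      (fun a : ZMod n => ZMod.castHom h (ZMod m) a = c2), Finset.card_product]
  have h1 := card_fiber_castHom m n h c1
  have h2 := card_fiber_castHom m n h c2
  calc (Finset.univ.filter fun x : ZMod n => ZMod.castHom h (ZMod m) x = c1).card *
      (Finset.univ.filter fun x : ZMod n => ZMod.castHom h (ZMod m) x = c2).card * (m * m)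
      = ((Finset.univ.filter fun x : ZMod n => ZMod.castHom h (ZMod m) x = c1).card * m) *
        ((Finset.univ.filter fun x : ZMod n => ZMod.castHom h (ZMod m) x = c2).card * m) := by
          ring
    _ = n * n := by rw [h1, h2]

/-- the subtype of units is equivalent to the unit group -/
noncomputable def isUnitEquivUnits {M : Type*} [Monoid M] : {x : M // IsUnit x} ≃ Mˣ where
  toFun x := x.2.unit
  invFun u := ⟨(u : M), u.isUnit⟩
  left_inv x := Subtype.ext x.2.unit_spec
  right_inv u := Units.ext u.isUnit.unit_spec

lemma cnt_unit_val {p k : ℕ} [Fact p.Prime] (hp2 : p ≠ 2) (hp4 : p % 4 = 3) (hk : k ≠ 0)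
    {t : ZMod (p^k)} (ht : IsUnit t) : cnt (p^k) t = (p+1) * p^(k-1) := by
  classical
  haveI : NeZero (p^k) := neZeroPow
  have hp : p.Prime := Fact.out
  -- total count
  have htotal : ∑ b : ZMod (p^k), cnt (p^k) b = p^k * p^k := by
    have h := Finset.card_eq_sum_card_fiberwise
      (s := (Finset.univ : Finset (ZMod (p^k) × ZMod (p^k))))
      (t := (Finset.univ : Finset (ZMod (p^k))))
      (f := fun z => z.1^2 + z.2^2) (fun x _ => Finset.mem_univ _)
    rw [Finset.card_univ, Fintype.card_prod, ZMod.card] at h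
    simpa [cnt] using h.symm
  -- nonunit sum
  have hnon : ∑ b ∈ Finset.univ.filter (fun b : ZMod (p^k) => ¬ IsUnit b), cnt (p^k) b
      = p^(k-1) * p^(k-1) := by
    have h := Finset.card_eq_sum_card_fiberwise
      (s := Finset.univ.filter (fun z : ZMod (p^k) × ZMod (p^k) => ¬ IsUnit (z.1^2+z.2^2)))
      (t := Finset.univ.filter (fun b : ZMod (p^k) => ¬ IsUnit b))
      (f := fun z => z.1^2+z.2^2)
      (fun x hx => by
        simp only [Finset.mem_coe, Finset.mem_filter, Finset.mem_univ, true_and] at hx ⊢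
        exact hx)
    have h2 : ∀ b ∈ Finset.univ.filter (fun b : ZMod (p^k) => ¬ IsUnit b),
        ((Finset.univ.filter
            (fun z : ZMod (p^k) × ZMod (p^k) => ¬ IsUnit (z.1^2+z.2^2))).filter
          (fun z => z.1^2+z.2^2 = b)).card = cnt (p^k) b := by
      intro b hb
      simp only [Finset.mem_filter, Finset.mem_univ, true_and] at hb
      rw [cnt]
      rw [Finset.filter_filter]
      apply congrArg
      apply Finset.filter_congr
      intro z _
      constructor
      · rintro ⟨-, h⟩; exact h
      · intro h; exact ⟨h ▸ hb, h⟩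
    rw [Finset.sum_congr rfl h2] at h
    rw [← h]
    -- now compute card of the nonunit-sum set
    have hiff : ∀ z : ZMod (p^k) × ZMod (p^k),
        (¬ IsUnit (z.1^2+z.2^2)) ↔ (ZMod.castHom (dvd_pow_self p hk) (ZMod p) z.1 = 0 ∧
          ZMod.castHom (dvd_pow_self p hk) (ZMod p) z.2 = 0) := by
      intro z
      rw [isUnit_iff_proj hk, not_not]
      constructor
      · intro h0
        have : (ZMod.castHom (dvd_pow_self p hk) (ZMod p) z.1)^2 +
            (ZMod.castHom (dvd_pow_self p hk) (ZMod p) z.2)^2 = 0 := by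
          rw [← map_pow, ← map_pow, ← map_add, h0]
        exact sqAddSq_eq_zero p hp4 this
      · rintro ⟨h1, h2⟩
        rw [map_add, map_pow, map_pow, h1, h2]
        ring
    rw [Finset.filter_congr (fun z _ => by rw [hiff z])]
    have hcard := filter_pair_proj_card p (p^k) (dvd_pow_self p hk) (0 : ZMod p) (0 : ZMod p)
    have hppos : 0 < p * p := Nat.mul_pos hp.pos hp.pos
    have hps : p^(k-1) * p = p^k := by
      rw [← pow_succ, Nat.sub_add_cancel (Nat.one_le_iff_ne_zero.mpr hk)]
    have hnn : p^k * p^k = (p^(k-1) * p^(k-1)) * (p * p) := by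
      rw [← hps]; ring
    rw [hnn] at hcard
    exact Nat.eq_of_mul_eq_mul_right hppos hcard
  -- unit sum via constancy
  have hcardfilter : (Finset.univ.filter (fun b : ZMod (p^k) => IsUnit b)).card
      = Nat.totient (p^k) := by
    rw [← ZMod.card_units_eq_totient (p^k), ← Fintype.card_congr
      (isUnitEquivUnits (M := ZMod (p^k))), Fintype.card_subtype]
  have hunitsum : ∑ b ∈ Finset.univ.filter (fun b : ZMod (p^k) => IsUnit b), cnt (p^k) b
      = Nat.totient (p^k) * cnt (p^k) t := by
    rw [Finset.sum_congr rfl (fun b hb => cnt_const_units hp2 hk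
      (by simpa using hb) ht), Finset.sum_const, hcardfilter, smul_eq_mul]
  have hsplit : Nat.totient (p^k) * cnt (p^k) t + p^(k-1) * p^(k-1) = p^k * p^k := by
    rw [← hunitsum, ← hnon, Finset.sum_filter_add_sum_filter_not]
    exact htotal
  -- final arithmetic
  have htot : Nat.totient (p^k) = p^(k-1) * (p - 1) :=
    Nat.totient_prime_pow hp (Nat.pos_of_ne_zero hk)
  rw [htot] at hsplit
  have hineq : p^(k-1) * (p - 1) * ((p+1) * p^(k-1)) + p^(k-1) * p^(k-1) = p^k * p^k := by
    obtain ⟨j, hj⟩ : ∃ j, k = j + 1 := ⟨k - 1, by omega⟩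
    obtain ⟨q, hq⟩ : ∃ q, p = q + 1 := ⟨p - 1, by omega⟩
    subst hj hq
    simp only [Nat.add_sub_cancel, pow_succ]
    ring
  have hpos : 0 < p^(k-1) * (p - 1) := by
    have := hp.two_le
    exact Nat.mul_pos (Nat.pow_pos hp.pos) (by omega)
  have hc := Nat.add_right_cancel (hsplit.trans hineq.symm)
  exact Nat.eq_of_mul_eq_mul_left hpos hc

lemma castHom_natCast_val {m n : ℕ} [NeZero n] (h : m ∣ n) (x : ZMod n) :
    ZMod.castHom h (ZMod m) x = (x.val : ZMod m) := by
  conv_lhs => rw [← ZMod.natCast_zmod_val x]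
  rw [map_natCast]

lemma cnt_reduce {p k : ℕ} [Fact p.Prime] (hp4 : p % 4 = 3) (t : ZMod (p^(k+2)))
    (ht : ¬ IsUnit t) :
    cnt (p^(k+2)) t = (Finset.univ.filter (fun w : ZMod (p^(k+1)) × ZMod (p^(k+1)) =>
      ((p^2*(w.1.val^2+w.2.val^2) : ℕ) : ZMod (p^(k+2))) = t)).card := by
  classical
  haveI h1 : NeZero (p^(k+2)) := neZeroPow
  haveI h2 : NeZero (p^(k+1)) := neZeroPow
  have hp : p.Prime := Fact.out
  have hk2 : (k+2) ≠ 0 := by omega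
  have hdvd : ∀ z : ZMod (p^(k+2)) × ZMod (p^(k+2)), z.1^2+z.2^2 = t →
      p ∣ z.1.val ∧ p ∣ z.2.val := by
    intro z hz
    have hnu : ¬ IsUnit (z.1^2+z.2^2) := by rw [hz]; exact ht
    rw [isUnit_iff_proj hk2, not_not, map_add, map_pow, map_pow] at hnu
    have h00 := sqAddSq_eq_zero p hp4 hnu
    rw [proj_natCast hk2, proj_natCast hk2] at h00
    exact ⟨(ZMod.natCast_eq_zero_iff _ _).mp h00.1,
      (ZMod.natCast_eq_zero_iff _ _).mp h00.2⟩
  have hvlt : ∀ x : ZMod (p^(k+2)), x.val / p < p^(k+1) := by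
    intro x
    rw [Nat.div_lt_iff_lt_mul hp.pos, ← pow_succ]
    exact ZMod.val_lt x
  have hmlt : ∀ w : ZMod (p^(k+1)), p * w.val < p^(k+2) := by
    intro w
    have := ZMod.val_lt w
    calc p * w.val < p * p^(k+1) := by
          exact (Nat.mul_lt_mul_left hp.pos).mpr this
      _ = p^(k+2) := by rw [← pow_succ']
  rw [cnt]
  apply Finset.card_bij'
    (fun z _ => (((z.1.val / p : ℕ) : ZMod (p^(k+1))), ((z.2.val / p : ℕ) : ZMod (p^(k+1)))))
    (fun w _ => (((p * w.1.val : ℕ) : ZMod (p^(k+2))), ((p * w.2.val : ℕ) : ZMod (p^(k+2)))))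
  · -- maps solutions to parameters
    intro z hz
    simp only [Finset.mem_filter, Finset.mem_univ, true_and] at hz ⊢
    rw [ZMod.val_cast_of_lt (hvlt z.1), ZMod.val_cast_of_lt (hvlt z.2)]
    have e : p^2*((z.1.val/p)^2+(z.2.val/p)^2) = z.1.val^2+z.2.val^2 := by
      obtain ⟨c1, hc1⟩ := (hdvd z hz).1
      obtain ⟨c2, hc2⟩ := (hdvd z hz).2
      rw [hc1, hc2, Nat.mul_div_cancel_left _ hp.pos, Nat.mul_div_cancel_left _ hp.pos]
      ring
    rw [e]
    push_cast [ZMod.natCast_zmod_val]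
    exact hz
  · -- parameters map to solutions
    intro w hw
    simp only [Finset.mem_filter, Finset.mem_univ, true_and] at hw ⊢
    push_cast at hw ⊢
    linear_combination hw
  · -- left inverse
    intro z hz
    simp only [Finset.mem_filter, Finset.mem_univ, true_and] at hz
    have d1 := (hdvd z hz).1
    have d2 := (hdvd z hz).2
    ext
    · simp only
      rw [ZMod.val_cast_of_lt (hvlt z.1), Nat.mul_div_cancel' d1, ZMod.natCast_zmod_val]
    · simp only
      rw [ZMod.val_cast_of_lt (hvlt z.2), Nat.mul_div_cancel' d2, ZMod.natCast_zmod_val]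
  · -- right inverse
    intro w _
    ext
    · simp only
      rw [ZMod.val_cast_of_lt (hmlt w.1), Nat.mul_div_cancel_left _ hp.pos,
        ZMod.natCast_zmod_val]
    · simp only
      rw [ZMod.val_cast_of_lt (hmlt w.2), Nat.mul_div_cancel_left _ hp.pos,
        ZMod.natCast_zmod_val]

lemma cnt_p2 {p k : ℕ} [Fact p.Prime] (hp4 : p % 4 = 3) (c : ℕ)
    (ht : ¬ IsUnit (((p^2*c : ℕ) : ZMod (p^(k+2))))) :
    cnt (p^(k+2)) ((p^2*c : ℕ) : ZMod (p^(k+2)))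
      = p^2 * cnt (p^k) ((c : ℕ) : ZMod (p^k)) := by
  classical
  haveI i1 : NeZero (p^(k+2)) := neZeroPow
  haveI i2 : NeZero (p^(k+1)) := neZeroPow
  haveI i3 : NeZero (p^k) := neZeroPow
  have hp : p.Prime := Fact.out
  have hdv : p^k ∣ p^(k+1) := pow_dvd_pow p (Nat.le_succ k)
  rw [cnt_reduce hp4 _ ht]
  -- rewrite the condition
  have hcond : ∀ w : ZMod (p^(k+1)) × ZMod (p^(k+1)),
      (((p^2*(w.1.val^2+w.2.val^2) : ℕ) : ZMod (p^(k+2))) = ((p^2*c : ℕ) : ZMod (p^(k+2))))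
      ↔ ((ZMod.castHom hdv (ZMod (p^k)) w.1)^2 + (ZMod.castHom hdv (ZMod (p^k)) w.2)^2
          = ((c : ℕ) : ZMod (p^k))) := by
    intro w
    rw [ZMod.natCast_eq_natCast_iff]
    have hmod : p^(k+2) = p^2 * p^k := by rw [← pow_add, Nat.add_comm]
    rw [hmod, Nat.ModEq.mul_left_cancel_iff' (pow_ne_zero 2 hp.ne_zero),
      ← ZMod.natCast_eq_natCast_iff]
    have hcast : ((w.1.val^2+w.2.val^2 : ℕ) : ZMod (p^k))
        = (ZMod.castHom hdv (ZMod (p^k)) w.1)^2 + (ZMod.castHom hdv (ZMod (p^k)) w.2)^2 := by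
      rw [castHom_natCast_val hdv w.1, castHom_natCast_val hdv w.2]
      push_cast
      ring
    rw [hcast]
  rw [Finset.filter_congr (fun w _ => by rw [hcond w])]
  -- fiberwise count
  have h := Finset.card_eq_sum_card_fiberwise
    (s := Finset.univ.filter (fun w : ZMod (p^(k+1)) × ZMod (p^(k+1)) =>
      (ZMod.castHom hdv (ZMod (p^k)) w.1)^2 + (ZMod.castHom hdv (ZMod (p^k)) w.2)^2
        = ((c : ℕ) : ZMod (p^k))))
    (t := Finset.univ.filter (fun y : ZMod (p^k) × ZMod (p^k) =>
      y.1^2 + y.2^2 = ((c : ℕ) : ZMod (p^k))))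
    (f := fun w => (ZMod.castHom hdv (ZMod (p^k)) w.1, ZMod.castHom hdv (ZMod (p^k)) w.2))
    (fun w hw => by
      simp only [Finset.mem_coe, Finset.mem_filter, Finset.mem_univ, true_and] at hw ⊢
      exact hw)
  have h2 : ∀ y ∈ Finset.univ.filter (fun y : ZMod (p^k) × ZMod (p^k) =>
      y.1^2 + y.2^2 = ((c : ℕ) : ZMod (p^k))),
      ((Finset.univ.filter (fun w : ZMod (p^(k+1)) × ZMod (p^(k+1)) =>
        (ZMod.castHom hdv (ZMod (p^k)) w.1)^2 + (ZMod.castHom hdv (ZMod (p^k)) w.2)^2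
          = ((c : ℕ) : ZMod (p^k)))).filter
        (fun w => (ZMod.castHom hdv (ZMod (p^k)) w.1, ZMod.castHom hdv (ZMod (p^k)) w.2)
          = y)).card = p^2 := by
    intro y hy
    simp only [Finset.mem_filter, Finset.mem_univ, true_and] at hy
    rw [Finset.filter_filter]
    have heq : ∀ w : ZMod (p^(k+1)) × ZMod (p^(k+1)),
        (((ZMod.castHom hdv (ZMod (p^k)) w.1)^2 + (ZMod.castHom hdv (ZMod (p^k)) w.2)^2
          = ((c : ℕ) : ZMod (p^k))) ∧
          (ZMod.castHom hdv (ZMod (p^k)) w.1, ZMod.castHom hdv (ZMod (p^k)) w.2) = y)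
        ↔ (ZMod.castHom hdv (ZMod (p^k)) w.1 = y.1 ∧
           ZMod.castHom hdv (ZMod (p^k)) w.2 = y.2) := by
      intro w
      rw [Prod.ext_iff]
      simp only []
      constructor
      · rintro ⟨-, h1, h2⟩; exact ⟨h1, h2⟩
      · rintro ⟨h1, h2⟩
        refine ⟨?_, h1, h2⟩
        rw [h1, h2, hy]
    rw [Finset.filter_congr (fun w _ => by rw [heq w])]
    have hcard := filter_pair_proj_card (p^k) (p^(k+1)) hdv y.1 y.2
    have hpos : 0 < p^k * p^k := Nat.mul_pos (pow_pos hp.pos k) (pow_pos hp.pos k)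
    have hiden : p^(k+1) * p^(k+1) = p^2 * (p^k * p^k) := by
      rw [pow_succ]; ring
    rw [hiden] at hcard
    exact Nat.eq_of_mul_eq_mul_right hpos hcard
  rw [Finset.sum_congr rfl h2, Finset.sum_const, smul_eq_mul] at h
  rw [h, cnt, mul_comm]

lemma cnt_val_p_zero {p k : ℕ} [Fact p.Prime] (hp4 : p % 4 = 3) {β : ℕ}
    (hβ : ¬ p ∣ β) (t : ZMod (p^(k+2))) (htv : t.val = p * β) (ht : ¬ IsUnit t) :
    cnt (p^(k+2)) t = 0 := by
  classical
  haveI i1 : NeZero (p^(k+2)) := neZeroPow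
  have hp : p.Prime := Fact.out
  rw [cnt_reduce hp4 t ht, Finset.card_eq_zero]
  rw [Finset.eq_empty_iff_forall_notMem]
  intro w hw
  simp only [Finset.mem_filter, Finset.mem_univ, true_and] at hw
  -- t = cast of its value
  have ht2 : t = ((p * β : ℕ) : ZMod (p^(k+2))) := by rw [← htv, ZMod.natCast_zmod_val]
  rw [ht2, ZMod.natCast_eq_natCast_iff] at hw
  -- derive p^2 ∣ p * β
  have hdvd : (p:ℤ)^2 ∣ (p:ℤ) * (β:ℤ) := by
    have hwz : ((p^2*(w.1.val^2+w.2.val^2) : ℕ) : ℤ) ≡ ((p * β : ℕ) : ℤ) [ZMOD ((p^(k+2) : ℕ) : ℤ)] := by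
      exact_mod_cast Int.natCast_modEq_iff.mpr hw
    have hd : (((p^(k+2) : ℕ)) : ℤ) ∣ ((p * β : ℕ) : ℤ) - ((p^2*(w.1.val^2+w.2.val^2) : ℕ) : ℤ) :=
      Int.ModEq.dvd hwz
    have hd2 : (p:ℤ)^2 ∣ ((p * β : ℕ) : ℤ) - ((p^2*(w.1.val^2+w.2.val^2) : ℕ) : ℤ) := by
      refine dvd_trans ?_ hd
      push_cast
      exact pow_dvd_pow (p:ℤ) (by omega)
    have hd3 : (p:ℤ)^2 ∣ ((p^2*(w.1.val^2+w.2.val^2) : ℕ) : ℤ) := by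
      push_cast
      exact Dvd.intro _ rfl
    have := dvd_add hd2 hd3
    push_cast at this ⊢
    rwa [sub_add_cancel] at this
  have : (p:ℤ) ∣ (β : ℤ) := by
    have h2 := hdvd
    rw [pow_two] at h2
    exact (mul_dvd_mul_iff_left (by exact_mod_cast hp.ne_zero : (p:ℤ) ≠ 0)).mp h2
  exact hβ (by exact_mod_cast this)

lemma sol_dvd {p k : ℕ} [Fact p.Prime] (hp4 : p % 4 = 3) (hk : k ≠ 0) {t : ZMod (p^k)}
    (ht : ¬ IsUnit t) {z : ZMod (p^k) × ZMod (p^k)} (hz : z.1^2+z.2^2 = t) :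
    p ∣ z.1.val ∧ p ∣ z.2.val := by
  have hnu : ¬ IsUnit (z.1^2+z.2^2) := by rw [hz]; exact ht
  rw [isUnit_iff_proj hk, not_not, map_add, map_pow, map_pow] at hnu
  have h00 := sqAddSq_eq_zero p hp4 hnu
  rw [proj_natCast hk, proj_natCast hk] at h00
  exact ⟨(ZMod.natCast_eq_zero_iff _ _).mp h00.1,
    (ZMod.natCast_eq_zero_iff _ _).mp h00.2⟩

lemma cnt_formula {p : ℕ} [Fact p.Prime] (hp2 : p ≠ 2) (hp4 : p % 4 = 3) (k : ℕ) :
    ∀ t : ZMod (p^k),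
    (t = 0 → cnt (p^k) t = p^(2*(k/2))) ∧
    (∀ α β : ℕ, t ≠ 0 → t.val = p^α * β → ¬ p ∣ β → α < k →
      ((Even α → cnt (p^k) t = (p+1) * p^(k-1)) ∧ (Odd α → cnt (p^k) t = 0))) := by
  have hp : p.Prime := Fact.out
  induction k using Nat.strong_induction_on with
  | _ k IH =>
    match k with
    | 0 =>
      intro t
      haveI : Subsingleton (ZMod (p^0)) := by rw [pow_zero]; infer_instance
      constructor
      · intro _
        have h1 : cnt (p^0) t = 1 := by
          rw [cnt]
          rw [Finset.filter_true_of_mem (fun z _ => Subsingleton.elim _ _), Finset.card_univ]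
          haveI : NeZero (p^0) := neZeroPow
          rw [Fintype.card_prod, ZMod.card, pow_zero]
          norm_num
        simpa using h1
      · intro α β _ _ _ hlt
        exact absurd hlt (Nat.not_lt_zero α)
    | 1 =>
      intro t
      haveI : NeZero (p^1) := neZeroPow
      constructor
      · rintro rfl
        have hnu : ¬ IsUnit (0 : ZMod (p^1)) := by
          haveI : Fact (1 < p^1) := ⟨by simpa using hp.one_lt⟩
          exact not_isUnit_zero
        have hone : cnt (p^1) (0 : ZMod (p^1)) = 1 := by
          rw [cnt]
          have hfilter : Finset.univ.filter
              (fun z : ZMod (p^1) × ZMod (p^1) => z.1^2+z.2^2 = 0)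
              = {((0 : ZMod (p^1)), (0 : ZMod (p^1)))} := by
            ext z
            simp only [Finset.mem_filter, Finset.mem_univ, true_and, Finset.mem_singleton]
            constructor
            · intro hz
              obtain ⟨d1, d2⟩ := sol_dvd hp4 one_ne_zero hnu hz
              have hl1 : z.1.val < p := by simpa using ZMod.val_lt z.1
              have hl2 : z.2.val < p := by simpa using ZMod.val_lt z.2
              have hz1 : z.1 = 0 := by
                rw [← ZMod.val_eq_zero]
                exact Nat.eq_zero_of_dvd_of_lt d1 hl1
              have hz2 : z.2 = 0 := by
                rw [← ZMod.val_eq_zero]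
                exact Nat.eq_zero_of_dvd_of_lt d2 hl2
              rw [Prod.ext_iff]
              exact ⟨hz1, hz2⟩
            · intro hz
              rw [hz]
              simp
          rw [hfilter, Finset.card_singleton]
        simpa using hone
      · intro α β htne htv hβ hαlt
        have hα0 : α = 0 := by omega
        subst hα0
        have htu : IsUnit t := by
          rw [isUnit_iff_not_dvd one_ne_zero, htv]
          simpa using hβ
        constructor
        · intro _
          exact cnt_unit_val hp2 hp4 one_ne_zero htu
        · intro ho
          exact absurd ho (by decide)
    | (m+2) =>
      intro t
      haveI : NeZero (p^(m+2)) := neZeroPow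
      have IHm := IH m (by omega)
      constructor
      · rintro rfl
        have hnu : ¬ IsUnit (0 : ZMod (p^(m+2))) := by
          haveI : Fact (1 < p^(m+2)) := ⟨Nat.one_lt_pow (by omega) hp.one_lt⟩
          exact not_isUnit_zero
        have h0 : (0 : ZMod (p^(m+2))) = ((p^2*0 : ℕ) : ZMod (p^(m+2))) := by simp
        rw [h0] at hnu ⊢
        rw [cnt_p2 hp4 0 hnu]
        have hz : ((0:ℕ) : ZMod (p^m)) = 0 := Nat.cast_zero
        rw [hz, (IHm 0).1 rfl]
        have he : 2*((m+2)/2) = 2*(m/2)+2 := by omega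
        rw [he, pow_add]
        ring
      · intro α β htne htv hβ hαlt
        obtain _|_|a := α
        · -- α = 0 : unit case
          have htu : IsUnit t := by
            rw [isUnit_iff_not_dvd (by omega : (m+2) ≠ 0), htv]
            simpa using hβ
          constructor
          · intro _
            exact cnt_unit_val hp2 hp4 (by omega) htu
          · intro ho
            exact absurd ho (by decide)
        · -- α = 1
          have hnu : ¬ IsUnit t := by
            rw [isUnit_iff_not_dvd (by omega : (m+2) ≠ 0), not_not, htv, pow_one]
            exact Dvd.intro β rfl
          constructor
          · intro he
            exact absurd he (by decide)
          · intro _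
            exact cnt_val_p_zero hp4 hβ t (by rw [htv, pow_one]) hnu
        · -- α = a + 2
          have hnu : ¬ IsUnit t := by
            rw [isUnit_iff_not_dvd (by omega : (m+2) ≠ 0), not_not, htv]
            exact Dvd.dvd.mul_right (dvd_pow_self p (by omega)) β
          have htval : t = ((p^2*(p^a*β) : ℕ) : ZMod (p^(m+2))) := by
            conv_lhs => rw [← ZMod.natCast_zmod_val t]
            congr 1
            rw [htv, pow_add]
            ring
          have hvlt : p^a*β < p^m := by
            have h1 : t.val < p^(m+2) := ZMod.val_lt t
            rw [htv] at h1
            have h2 : p^2*(p^a*β) < p^2*p^m := by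
              calc p^2*(p^a*β) = p^(a+2)*β := by rw [pow_add]; ring
                _ < p^(m+2) := h1
                _ = p^2*p^m := by rw [← pow_add]; congr 1; omega
            exact Nat.lt_of_mul_lt_mul_left h2
          have hsval : (((p^a*β : ℕ) : ZMod (p^m))).val = p^a*β :=
            ZMod.val_cast_of_lt hvlt
          have hsne : ((p^a*β : ℕ) : ZMod (p^m)) ≠ 0 := by
            intro h0
            have hv0 : p^a*β = 0 := by rw [← hsval, h0, ZMod.val_zero]
            rcases Nat.mul_eq_zero.mp hv0 with h | h
            · exact pow_ne_zero a hp.ne_zero h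
            · exact hβ (h ▸ dvd_zero p)
          have hres := (IHm ((p^a*β : ℕ) : ZMod (p^m))).2 a β hsne
            (by rw [hsval]) hβ (by omega)
          rw [htval, cnt_p2 hp4 (p^a*β) (htval ▸ hnu)]
          constructor
          · intro he
            have hea : Even a := by
              rcases he with ⟨r, hr⟩
              exact ⟨r-1, by omega⟩
            rw [hres.1 hea]
            have e : m + 2 - 1 = (m-1) + 2 := by omega
            rw [e]
            ring
          · intro ho
            have hoa : Odd a := by
              rcases ho with ⟨r, hr⟩
              exact ⟨r-1, by omega⟩
            rw [hres.2 hoa, Nat.mul_zero]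

theorem stmt_9 (p : ℕ) (hp : p.Prime) (hodd : Odd p) (hp4 : p % 4 = 3)
    (k : ℕ) (hk : 1 ≤ k) (t : ZMod (p ^ k)) :
    (t = 0 → sumSqCount 2 (p ^ k) t = p ^ (2 * (k / 2))) ∧
    (∀ α β : ℕ, t ≠ 0 → t.val = p ^ α * β → ¬ p ∣ β → α < k →
      ((Even α → sumSqCount 2 (p ^ k) t = (p + 1) * p ^ (k - 1)) ∧
       (Odd α → sumSqCount 2 (p ^ k) t = 0))) := by
  haveI : Fact p.Prime := ⟨hp⟩
  haveI : NeZero (p^k) := neZeroPow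
  have hp2 : p ≠ 2 := by omega
  have h := cnt_formula hp2 hp4 k t
  rw [sumSqCount_eq_cnt]
  constructor
  · intro h0
    rw [h.1 h0]
  · intro α β h1 h2 h3 h4
    have h5 := h.2 α β h1 h2 h3 h4
    constructor
    · intro he
      exact h5.1 he
    · intro ho
      exact h5.2 ho
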